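/- Let F be a probability distribution on ℝ with survival function F̄ = 1 − F, and suppose that (i) F has a density f on the interval [a, ra], where a > 0 and r > 1, and (ii) for some constant A > 0, f(x)/F̄(x) ≥ A/x for all x ∈ [a, ra]. Then ∫_a^{ra} f(x)/x dx ≥ (1 − 1/r)·(A/(1+A))·(F̄(a)/a). -/

import Mathlib

open MeasureTheory ProbabilityTheory Filter Real Set

noncomputable section


lemma aux_int_invsq (t b : ℝ) (ht : 0 < t) (htb : t ≤ b) :
    ∫ x in Ioc t b, (x ^ 2)⁻¹ = t⁻¹ - b⁻¹ := by
  rw [← intervalIntegral.integral_of_le htb]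
  have h0 : (0:ℝ) ∉ Set.uIcc t b := by
    rw [Set.uIcc_of_le htb]; intro h; exact absurd h.1 (by linarith)
  have h := integral_zpow (a := t) (b := b) (n := -2) (Or.inr ⟨by norm_num, h0⟩)
  have heq : ∀ x : ℝ, x ^ (-2 : ℤ) = (x ^ 2)⁻¹ := fun x =>
    by rw [zpow_neg]; norm_num [zpow_ofNat]
  simp only [heq] at h
  rw [h]
  norm_num
  ring

lemma aux_swap (g : ℝ → ℝ) (hg : MeasureTheory.StronglyMeasurable g)
    (a b : ℝ) (ha : 0 < a) (hab : a < b) (hgi : IntegrableOn g (Ioc a b)) :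
    ∫ x in Ioc a b, (∫ t in Ioc a x, g t) * (x ^ 2)⁻¹ =
      ∫ t in Ioc a b, g t * (t⁻¹ - b⁻¹) := by
  set μ := volume.restrict (Ioc a b) with hμ
  haveI : IsFiniteMeasure μ := by
    constructor
    rw [hμ, Measure.restrict_apply_univ]
    exact measure_Ioc_lt_top
  set Φ : ℝ → ℝ → ℝ := fun x t => (Iic x).indicator g t * (x ^ 2)⁻¹ with hΦ
  have hΦmeas : AEStronglyMeasurable (Function.uncurry Φ) (μ.prod μ) := by
    have hset : MeasurableSet {p : ℝ × ℝ | p.2 ≤ p.1} :=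
      measurableSet_le measurable_snd measurable_fst
    have : Function.uncurry Φ =
        Set.indicator {p : ℝ × ℝ | p.2 ≤ p.1} (fun p => g p.2 * (p.1 ^ 2)⁻¹) := by
      ext p
      by_cases hp : p.2 ≤ p.1
      · simp [Function.uncurry, hΦ, Set.indicator_of_mem, hp,
          Set.indicator_of_mem (Set.mem_Iic.mpr hp)]
      · simp [Function.uncurry, hΦ, Set.indicator_of_notMem, hp,
          Set.indicator_of_notMem (fun h => hp (Set.mem_Iic.mp h))]
    rw [this]
    exact ((hg.measurable.comp measurable_snd).mul
      ((measurable_fst.pow_const 2).inv)).indicator hset |>.aestronglyMeasurable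
  have haemem : ∀ᵐ p : ℝ × ℝ ∂(μ.prod μ), p.1 ∈ Ioc a b := by
    rw [hμ, Measure.prod_restrict]
    filter_upwards [ae_restrict_mem (measurableSet_Ioc.prod measurableSet_Ioc)] with p hp
    exact hp.1
  have hΦint : Integrable (Function.uncurry Φ) (μ.prod μ) := by
    apply Integrable.mono' (g := fun p : ℝ × ℝ => ‖g p.2‖ * (a ^ 2)⁻¹) _ hΦmeas
    · filter_upwards [haemem] with p hp
      have hx2 : (p.1 ^ 2)⁻¹ ≤ (a ^ 2)⁻¹ := by
        apply inv_anti₀ (by positivity)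
        exact pow_le_pow_left₀ ha.le hp.1.le 2
      have : ‖(Iic p.1).indicator g p.2‖ ≤ ‖g p.2‖ := by
        rw [Set.indicator]
        split_ifs <;> simp [norm_nonneg]
      calc ‖Function.uncurry Φ p‖ = ‖(Iic p.1).indicator g p.2‖ * ‖(p.1 ^ 2)⁻¹‖ := by
            simp [Function.uncurry, hΦ, abs_mul]
        _ ≤ ‖g p.2‖ * (a ^ 2)⁻¹ := by
            apply mul_le_mul this _ (norm_nonneg _) (norm_nonneg _)
            rw [Real.norm_eq_abs, abs_of_nonneg (by positivity)]
            exact hx2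
    · -- integrability of dominating function
      rw [integrable_prod_iff]
      constructor
      · exact Filter.Eventually.of_forall fun x => (hgi.norm.mul_const _)
      · simp only []; exact integrable_const (∫ (y : ℝ), ‖‖g y‖ * (a ^ 2)⁻¹‖ ∂μ)
      · exact (hg.measurable.norm.comp measurable_snd).aestronglyMeasurable.mul
          aestronglyMeasurable_const
  have hswap := integral_integral_swap hΦint
  have hL : (∫ x, (∫ t, Φ x t ∂μ) ∂μ) =
      ∫ x in Ioc a b, (∫ t in Ioc a x, g t) * (x ^ 2)⁻¹ := by
    rw [hμ]
    apply integral_congr_ae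
    filter_upwards [ae_restrict_mem measurableSet_Ioc] with x hx
    have h1 : (∫ t, Φ x t ∂μ) = (∫ t, (Iic x).indicator g t ∂μ) * (x ^ 2)⁻¹ :=
      integral_mul_const _ _
    have h2 : (∫ t, (Iic x).indicator g t ∂μ) = ∫ t in Ioc a x, g t := by
      have hseteq : Iic x ∩ Ioc a b = Ioc a x := by
        ext t
        simp only [Set.mem_inter_iff, Set.mem_Iic, Set.mem_Ioc]
        constructor
        · rintro ⟨h1, h2, h3⟩; exact ⟨h2, h1⟩
        · rintro ⟨h1, h2⟩; exact ⟨h2, h1, le_trans h2 hx.2⟩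
      rw [hμ, integral_indicator measurableSet_Iic,
        Measure.restrict_restrict measurableSet_Iic, hseteq]
    rw [h1, h2]
  have hR : (∫ t, (∫ x, Φ x t ∂μ) ∂μ) = ∫ t in Ioc a b, g t * (t⁻¹ - b⁻¹) := by
    rw [hμ]
    apply integral_congr_ae
    filter_upwards [ae_restrict_mem measurableSet_Ioc] with t ht
    have h1 : (fun x => Φ x t) = (Ici t).indicator (fun x => g t * (x ^ 2)⁻¹) := by
      ext x
      by_cases hx : t ≤ x
      · simp [hΦ, Set.indicator_of_mem (Set.mem_Iic.mpr hx),
          Set.indicator_of_mem (Set.mem_Ici.mpr hx)]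
      · simp [hΦ, Set.indicator_of_notMem (fun h => hx (Set.mem_Iic.mp h)),
          Set.indicator_of_notMem (fun h => hx (Set.mem_Ici.mp h))]
    have h2 : Ici t ∩ Ioc a b = Icc t b := by
      ext x
      simp only [Set.mem_inter_iff, Set.mem_Ici, Set.mem_Ioc, Set.mem_Icc]
      constructor
      · rintro ⟨u1, u2, u3⟩; exact ⟨u1, u3⟩
      · rintro ⟨u1, u2⟩; exact ⟨u1, lt_of_lt_of_le ht.1 u1, u2⟩
    calc (∫ x, Φ x t ∂μ) = ∫ x in Icc t b, g t * (x ^ 2)⁻¹ := by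
          rw [hμ]
          simp only [h1]
          rw [integral_indicator measurableSet_Ici,
            Measure.restrict_restrict measurableSet_Ici, h2]
      _ = ∫ x in Ioc t b, g t * (x ^ 2)⁻¹ := integral_Icc_eq_integral_Ioc
      _ = g t * ∫ x in Ioc t b, (x ^ 2)⁻¹ := integral_const_mul _ _
      _ = g t * (t⁻¹ - b⁻¹) := by
          rw [aux_int_invsq t b (lt_trans ha ht.1) ht.2]
  rw [← hL, ← hR]
  exact hswap


/-- **Lemma 3**. Let `F` be a distribution function on `ℝ` with tail `F̄ = 1 − F`, having a
density `f` on the interval `[a, ra]` (`a > 0`, `r > 1`) on which the hazard rate satisfies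
`f(x)/F̄(x) ≥ A/x` for some `A > 0`.  Then
`∫_a^{ra} f(x)/x dx ≥ (1 − 1/r) (A/(1+A)) (F̄(a)/a)`. -/
theorem lemma3_hazard_integral_bound
    (F f : ℝ → ℝ) (a r A : ℝ) (ha : 0 < a) (hr : 1 < r) (hA : 0 < A)
    (hFmono : Monotone F) (hF0 : ∀ x, 0 ≤ F x) (hF1 : ∀ x, F x ≤ 1)
    (hf_int : IntervalIntegrable f volume a (r * a))
    (hdens : ∀ x ∈ Set.Icc a (r * a), F x - F a = ∫ t in a..x, f t)
    (hhaz : ∀ x ∈ Set.Icc a (r * a), A / x ≤ f x / (1 - F x)) :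
    (1 - 1 / r) * (A / (1 + A)) * ((1 - F a) / a) ≤ ∫ x in a..(r * a), f x / x := by
  set b := r * a with hbdef
  have hab : a < b := by rw [hbdef]; nlinarith
  have hb0 : 0 < b := ha.trans hab
  have haleb : a ≤ b := hab.le
  -- F < 1 on [a,b]
  have hFlt : ∀ x ∈ Icc a b, 0 < 1 - F x := by
    intro x hx
    by_contra h
    push_neg at h
    have h0 : 1 - F x = 0 := le_antisymm h (by linarith [hF1 x])
    have h1 := hhaz x hx
    rw [h0, div_zero] at h1
    have hxpos : 0 < x := lt_of_lt_of_le ha hx.1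
    have : 0 < A / x := div_pos hA hxpos
    linarith
  -- pointwise lower bound on f
  have hflb : ∀ x ∈ Icc a b, A * (1 - F x) / x ≤ f x := by
    intro x hx
    have hxpos : 0 < x := lt_of_lt_of_le ha hx.1
    have h := hhaz x hx
    rw [div_le_div_iff₀ hxpos (hFlt x hx)] at h
    rw [div_le_iff₀ hxpos]
    linarith
  have hfnn : ∀ x ∈ Icc a b, 0 ≤ f x := by
    intro x hx
    refine le_trans ?_ (hflb x hx)
    have hxpos : 0 < x := lt_of_lt_of_le ha hx.1
    have := (hFlt x hx).le
    positivity
  -- measurable representative g of f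
  have hfint : IntegrableOn f (Ioc a b) := hf_int.1
  set g := hfint.aestronglyMeasurable.mk f with hgdef
  have hgsm : MeasureTheory.StronglyMeasurable g :=
    hfint.aestronglyMeasurable.stronglyMeasurable_mk
  have hfg : f =ᵐ[volume.restrict (Ioc a b)] g := hfint.aestronglyMeasurable.ae_eq_mk
  have hgint : IntegrableOn g (Ioc a b) := hfint.congr hfg
  -- primitive of g
  have hprim : ∀ x ∈ Icc a b, (∫ t in Ioc a x, g t) = F x - F a := by
    intro x hx
    have hsub : Ioc a x ⊆ Ioc a b := Ioc_subset_Ioc le_rfl hx.2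
    have hfg' : f =ᵐ[volume.restrict (Ioc a x)] g :=
      ae_restrict_of_ae_restrict_of_subset hsub hfg
    rw [← integral_congr_ae hfg', ← intervalIntegral.integral_of_le hx.1, ← hdens x hx]
  set I := ∫ x in Ioc a b, g x * x⁻¹ with hI
  -- goal integral equals I
  have hIeq : (∫ x in a..b, f x / x) = I := by
    rw [intervalIntegral.integral_of_le haleb, hI]
    apply integral_congr_ae
    filter_upwards [hfg] with x hx
    rw [hx, div_eq_mul_inv]
  -- integrability facts
  have hcont_inv : ContinuousOn (fun x : ℝ => x⁻¹) (uIcc a b) := by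
    apply ContinuousOn.inv₀ continuousOn_id
    intro x hx
    rw [uIcc_of_le haleb] at hx
    exact ne_of_gt (lt_of_lt_of_le ha hx.1)
  have hcont_inv2 : ContinuousOn (fun x : ℝ => (x ^ 2)⁻¹) (uIcc a b) := by
    apply ContinuousOn.inv₀ (continuousOn_pow 2)
    intro x hx
    rw [uIcc_of_le haleb] at hx
    have : 0 < x := lt_of_lt_of_le ha hx.1
    positivity
  have h_gx_int : IntegrableOn (fun x => g x * x⁻¹) (Ioc a b) := by
    have : IntervalIntegrable (fun x => g x * x⁻¹) volume a b := by
      apply IntervalIntegrable.mul_continuousOn _ hcont_inv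
      exact (intervalIntegrable_iff_integrableOn_Ioc_of_le haleb).mpr hgint
    exact this.1
  have h_K_int : IntegrableOn (fun x => (1 - F x) * (x ^ 2)⁻¹) (Ioc a b) := by
    have hanti : Antitone (fun x : ℝ => 1 - F x) := fun x y hxy => by
      simp only [sub_le_sub_iff_left]; exact hFmono hxy
    have : IntervalIntegrable (fun x => (1 - F x) * (x ^ 2)⁻¹) volume a b :=
      (hanti.intervalIntegrable).mul_continuousOn hcont_inv2
    exact this.1
  have h_J_int : IntegrableOn (fun x => (∫ t in Ioc a x, g t) * (x ^ 2)⁻¹) (Ioc a b) := by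
    have hmono : Monotone (fun x : ℝ => F x - F a) := fun x y hxy => by
      simp only [sub_le_sub_iff_right]; exact hFmono hxy
    have h1 : IntervalIntegrable (fun x => (F x - F a) * (x ^ 2)⁻¹) volume a b :=
      (hmono.intervalIntegrable).mul_continuousOn hcont_inv2
    apply (h1.1).congr_fun _ measurableSet_Ioc
    intro x hx
    simp only []
    rw [hprim x (Ioc_subset_Icc_self hx)]
  have h_inv2_int : IntegrableOn (fun x : ℝ => (x ^ 2)⁻¹) (Ioc a b) := by
    have : IntervalIntegrable (fun x : ℝ => (x ^ 2)⁻¹) volume a b :=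
      ContinuousOn.intervalIntegrable hcont_inv2
    exact this.1
  -- main inequality: A * K ≤ I
  have hbound : ∀ᵐ x ∂(volume.restrict (Ioc a b)),
      A * ((1 - F x) * (x ^ 2)⁻¹) ≤ g x * x⁻¹ := by
    filter_upwards [hfg, ae_restrict_mem measurableSet_Ioc] with x hx1 hx2
    have hx' : x ∈ Icc a b := Ioc_subset_Icc_self hx2
    have hxpos : 0 < x := lt_of_lt_of_le ha hx'.1
    have heq : A * ((1 - F x) * (x ^ 2)⁻¹) = (A * (1 - F x) / x) * x⁻¹ := by
      rw [div_eq_mul_inv, sq, mul_inv]; ring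
    rw [← hx1, heq]
    exact mul_le_mul_of_nonneg_right (hflb x hx') (inv_nonneg.mpr hxpos.le)
  have hIK : A * ∫ x in Ioc a b, (1 - F x) * (x ^ 2)⁻¹ ≤ I := by
    rw [← integral_const_mul]
    exact integral_mono_ae (h_K_int.const_mul A) h_gx_int hbound
  -- decomposition of K
  have hK : ∫ x in Ioc a b, (1 - F x) * (x ^ 2)⁻¹
      = (1 - F a) * (a⁻¹ - b⁻¹)
        - ∫ x in Ioc a b, (∫ t in Ioc a x, g t) * (x ^ 2)⁻¹ := by
    have heq : ∀ x ∈ Ioc a b, (1 - F x) * (x ^ 2)⁻¹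
        = (1 - F a) * (x ^ 2)⁻¹ - (∫ t in Ioc a x, g t) * (x ^ 2)⁻¹ := by
      intro x hx
      rw [hprim x (Ioc_subset_Icc_self hx)]
      ring
    rw [setIntegral_congr_fun measurableSet_Ioc heq,
      integral_sub (h_inv2_int.const_mul _) h_J_int, integral_const_mul,
      aux_int_invsq a b ha haleb]
  -- Fubini
  have hJ : ∫ x in Ioc a b, (∫ t in Ioc a x, g t) * (x ^ 2)⁻¹
      = ∫ t in Ioc a b, g t * (t⁻¹ - b⁻¹) := aux_swap g hgsm a b ha hab hgint
  have hJsplit : ∫ t in Ioc a b, g t * (t⁻¹ - b⁻¹)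
      = I - (∫ t in Ioc a b, g t) * b⁻¹ := by
    have heq : ∀ t : ℝ, g t * (t⁻¹ - b⁻¹) = g t * t⁻¹ - g t * b⁻¹ := fun t => by ring
    simp only [heq]
    rw [integral_sub h_gx_int (hgint.mul_const _), integral_mul_const, hI]
  have hGb : 0 ≤ ∫ t in Ioc a b, g t := by
    apply integral_nonneg_of_ae
    filter_upwards [hfg, ae_restrict_mem measurableSet_Ioc] with x hx1 hx2
    rw [← hx1]
    exact hfnn x (Ioc_subset_Icc_self hx2)
  -- combine everything
  have hJleI : ∫ x in Ioc a b, (∫ t in Ioc a x, g t) * (x ^ 2)⁻¹ ≤ I := by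
    rw [hJ, hJsplit]
    have : 0 ≤ (∫ t in Ioc a b, g t) * b⁻¹ :=
      mul_nonneg hGb (inv_nonneg.mpr hb0.le)
    linarith
  have hmain : A * ((1 - F a) * (a⁻¹ - b⁻¹) - I) ≤ I := by
    calc A * ((1 - F a) * (a⁻¹ - b⁻¹) - I)
        ≤ A * ((1 - F a) * (a⁻¹ - b⁻¹)
            - ∫ x in Ioc a b, (∫ t in Ioc a x, g t) * (x ^ 2)⁻¹) := by
          apply mul_le_mul_of_nonneg_left _ hA.le
          linarith
      _ = A * ∫ x in Ioc a b, (1 - F x) * (x ^ 2)⁻¹ := by rw [hK]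
      _ ≤ I := hIK
  rw [hIeq]
  have hr0 : (0:ℝ) < r := lt_trans one_pos hr
  have hkey : (1 - 1 / r) * (A / (1 + A)) * ((1 - F a) / a)
      = (A * ((1 - F a) * (a⁻¹ - b⁻¹))) / (1 + A) := by
    rw [hbdef]
    field_simp
  rw [hkey, div_le_iff₀ (by linarith : (0:ℝ) < 1 + A)]
  nlinarith [hmain]
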